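/- Fix μ₁ μ₂ t₁ t₂ : ℝ and v₁ v₂ > 0. For y ∈ ({1, -1} : Set ℝ) define N y := gaussianPDFReal (y * μ₁) v₁ t₁ * ((1/2) * gaussianPDFReal (y * μ₂) v₂ t₂ + (1/2) * gaussianPDFReal (-y * μ₂) v₂ t₂). Then N 1 / (N 1 + N (-1)) = 1 / (1 + Real.exp (-(2 * μ₁ * t₁) / v₁)). In particular the posterior does not depend on t₂: when the spurious correlation probability equals 1/2, the Bayes-optimal classifier assigns zero weight to the spurious (non-causal) feature. -/

import Mathlib

open ProbabilityTheory
open scoped NNReal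

/-- When the spurious correlation probability equals `1/2`, the Bayes-optimal
classifier assigns zero weight to the spurious (non-causal) feature: the posterior
of the label `y = +1` does not depend on the spurious feature `t₂`. -/
theorem bayes_posterior_spurious_half (μ₁ μ₂ t₁ t₂ : ℝ) (v₁ v₂ : ℝ≥0)
    (hv₁ : 0 < v₁) (hv₂ : 0 < v₂)
    (N : ℝ → ℝ)
    (hN : ∀ y ∈ ({1, -1} : Set ℝ),
      N y = gaussianPDFReal (y * μ₁) v₁ t₁ *
        ((1 / 2) * gaussianPDFReal (y * μ₂) v₂ t₂ +
          (1 / 2) * gaussianPDFReal (-y * μ₂) v₂ t₂)) :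
    N 1 / (N 1 + N (-1)) = 1 / (1 + Real.exp (-(2 * μ₁ * t₁) / (v₁ : ℝ))) := by
  have h1 := hN 1 (by simp)
  have h2 := hN (-1) (by simp)
  set A := gaussianPDFReal μ₁ v₁ t₁ with hA
  set B := gaussianPDFReal (-μ₁) v₁ t₁ with hB
  set C := (1 / 2) * gaussianPDFReal μ₂ v₂ t₂ + (1 / 2) * gaussianPDFReal (-μ₂) v₂ t₂
    with hC
  have h1' : N 1 = A * C := by
    rw [h1, hA, hC]; ring_nf
  have h2' : N (-1) = B * C := by
    rw [h2, hB, hC]; ring_nf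
  have hApos : 0 < A := gaussianPDFReal_pos _ _ _ hv₁.ne'
  have hBpos : 0 < B := gaussianPDFReal_pos _ _ _ hv₁.ne'
  have hCpos : 0 < C := by
    have := gaussianPDFReal_pos μ₂ v₂ t₂ hv₂.ne'
    have := gaussianPDFReal_pos (-μ₂) v₂ t₂ hv₂.ne'
    positivity
  have hv₁' : (0:ℝ) < (v₁ : ℝ) := by exact_mod_cast hv₁
  have hBA : B = A * Real.exp (-(2 * μ₁ * t₁) / (v₁ : ℝ)) := by
    have hexp : -(t₁ - -μ₁) ^ 2 / (2 * (v₁:ℝ)) =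
        -(t₁ - μ₁) ^ 2 / (2 * (v₁:ℝ)) + -(2 * μ₁ * t₁) / (v₁:ℝ) := by
      field_simp
      ring
    rw [hA, hB, gaussianPDFReal, gaussianPDFReal, hexp, Real.exp_add, mul_assoc]
    ring
  rw [h1', h2', hBA]
  have hE : 0 < Real.exp (-(2 * μ₁ * t₁) / (v₁ : ℝ)) := Real.exp_pos _
  field_simp
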